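/- Let G' = (V', E') be a finite simple graph and k a natural number. Consider the network with graph G₀ = G', V_src = V_ld = V', and α = |E'|. Then G' has a vertex cover of size at most k if and only if there exists an attack V_a ⊆ V' with |V_a| ≤ k such that p(V_a, ∅) ≥ |V'| (i.e., every load node is disconnected). -/

import Mathlib

open scoped Classical

set_option maxHeartbeats 1000000
noncomputable section

variable {V : Type*} [Fintype V] [DecidableEq V]

/-- The number of shortest paths between `s` and `t` in `G` (σ_G(s,t)). -/
def numSP (G : SimpleGraph V) (s t : V) : ℕ :=
  Nat.card {w : G.Walk s t // w.length = G.dist s t}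

/-- The number of shortest paths between `s` and `t` in `G` passing through edge `e`
(σ_G(s,t | e)). -/
def numSPthru (G : SimpleGraph V) (s t : V) (e : Sym2 V) : ℕ :=
  Nat.card {w : G.Walk s t // w.length = G.dist s t ∧ e ∈ w.edges}

/-- `N_G(t)`: the vertices of `Vsrc \ {t}` reachable from `t` in `G` at minimum distance
from `t`. -/
def nearestSources (Vsrc : Finset V) (G : SimpleGraph V) (t : V) : Finset V :=
  ((Vsrc.erase t).filter (fun s => G.Reachable t s)).filter
    (fun s => ∀ s' ∈ (Vsrc.erase t).filter (fun s'' => G.Reachable t s''),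
      G.dist t s ≤ G.dist t s')

/-- The load of edge `e` in `G`:
`load_G(e) = Σ_{t ∈ Vld} Σ_{s ∈ N_G(t)} σ_G(s,t|e) / (|N_G(t)|·σ_G(s,t))`. -/
def eload (Vsrc Vld : Finset V) (G : SimpleGraph V) (e : Sym2 V) : ℝ :=
  ∑ t ∈ Vld, ∑ s ∈ nearestSources Vsrc G t,
    (numSPthru G s t e : ℝ) / (((nearestSources Vsrc G t).card : ℝ) * (numSP G s t : ℝ))

/-- The failure operator: removes every edge whose current load exceeds its capacity
`c_e = (1+α)·load_{G₀}(e)`. -/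
def Fop (Vsrc Vld : Finset V) (G0 : SimpleGraph V) (α : ℝ) (G : SimpleGraph V) :
    SimpleGraph V where
  Adj u v := G.Adj u v ∧ eload Vsrc Vld G s(u, v) ≤ (1 + α) * eload Vsrc Vld G0 s(u, v)
  symm := ⟨by
    intro u v h
    refine ⟨h.1.symm, ?_⟩
    rw [Sym2.eq_swap]
    exact h.2⟩
  loopless := ⟨fun v h => G.irrefl h.1⟩

/-- `F*(G)`: the fixed point reached by iterating the failure operator (reached after at
most `|E|+1 ≤ (card V)^2` applications, since each non-trivial application removes an edge). -/
def Fstar (Vsrc Vld : Finset V) (G0 : SimpleGraph V) (α : ℝ) (G : SimpleGraph V) :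
    SimpleGraph V :=
  (Fop Vsrc Vld G0 α)^[Fintype.card V ^ 2] G

/-- `G − S`: the (induced) subgraph obtained by deleting the vertices of `S`. -/
def deleteVerts (G : SimpleGraph V) (S : Finset V) : SimpleGraph V where
  Adj u v := G.Adj u v ∧ u ∉ S ∧ v ∉ S
  symm := ⟨fun u v h => ⟨h.1.symm, h.2.2, h.2.1⟩⟩
  loopless := ⟨fun v h => G.irrefl h.1⟩

/-- `disc(G)`: the number of load nodes from which no source (other than itself) is
reachable in `G`. -/
def disc (Vsrc Vld : Finset V) (G : SimpleGraph V) : ℕ :=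
  (Vld.filter (fun t => ∀ s ∈ Vsrc, s ≠ t → ¬ G.Reachable t s)).card

/-- The payoff `p(V_a,V_d) = disc(F*(G₀ − (V_a \ V_d)))`. -/
def payoff (Vsrc Vld : Finset V) (G0 : SimpleGraph V) (α : ℝ) (Va Vd : Finset V) : ℕ :=
  disc Vsrc Vld (Fstar Vsrc Vld G0 α (deleteVerts G0 (Va \ Vd)))



omit [Fintype V] in
lemma walk_length_one_eq {G : SimpleGraph V} {s t : V} (w : G.Walk s t) (hw : w.length = 1) :
    ∃ h : G.Adj s t, w = SimpleGraph.Walk.cons h SimpleGraph.Walk.nil := by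
  cases w with
  | nil => simp at hw
  | cons h p =>
    cases p with
    | nil => exact ⟨h, rfl⟩
    | cons h' p' => simp [SimpleGraph.Walk.length_cons] at hw

lemma numSP_adj {G : SimpleGraph V} {s t : V} (h : G.Adj s t) : numSP G s t = 1 := by
  rw [numSP, Nat.card_eq_one_iff_unique]
  have hd : G.dist s t = 1 := SimpleGraph.dist_eq_one_iff_adj.mpr h
  constructor
  · constructor
    rintro ⟨w1, hw1⟩ ⟨w2, hw2⟩
    obtain ⟨h1, rfl⟩ := walk_length_one_eq w1 (by rw [hw1, hd])
    obtain ⟨h2, rfl⟩ := walk_length_one_eq w2 (by rw [hw2, hd])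
    rfl
  · exact ⟨⟨SimpleGraph.Walk.cons h SimpleGraph.Walk.nil, by simp [hd]⟩⟩

lemma numSPthru_adj {G : SimpleGraph V} {s t : V} (h : G.Adj s t) (e : Sym2 V) :
    numSPthru G s t e = if e = s(s,t) then 1 else 0 := by
  have hd : G.dist s t = 1 := SimpleGraph.dist_eq_one_iff_adj.mpr h
  rw [numSPthru]
  split_ifs with he
  · rw [Nat.card_eq_one_iff_unique]
    constructor
    · constructor
      rintro ⟨w1, hw1, _⟩ ⟨w2, hw2, _⟩
      obtain ⟨h1, rfl⟩ := walk_length_one_eq w1 (by rw [hw1, hd])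
      obtain ⟨h2, rfl⟩ := walk_length_one_eq w2 (by rw [hw2, hd])
      rfl
    · exact ⟨⟨SimpleGraph.Walk.cons h SimpleGraph.Walk.nil, by simp [hd, he]⟩⟩
  · have : IsEmpty {w : G.Walk s t // w.length = G.dist s t ∧ e ∈ w.edges} := by
      constructor
      rintro ⟨w, hw, hew⟩
      obtain ⟨h1, rfl⟩ := walk_length_one_eq w (by rw [hw, hd])
      simp at hew
      exact he hew
    exact Nat.card_of_isEmpty

lemma nearestSources_univ (G : SimpleGraph V) (t : V) :
    nearestSources Finset.univ G t = G.neighborFinset t := by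
  ext s
  simp only [nearestSources, Finset.mem_filter, Finset.mem_erase, Finset.mem_univ, and_true,
    SimpleGraph.mem_neighborFinset]
  constructor
  · rintro ⟨⟨hne, hr⟩, hmin⟩
    obtain ⟨w⟩ := hr
    have hds : G.dist t s = 1 := by
      cases w with
      | nil => exact absurd rfl hne
      | cons hadj p =>
        rename_i b
        have hb := hmin b ⟨hadj.ne', hadj.reachable⟩
        have hdb : G.dist t b = 1 := SimpleGraph.dist_eq_one_iff_adj.mpr hadj
        have hpos : 0 < G.dist t s :=
          (SimpleGraph.Reachable.pos_dist_of_ne ⟨SimpleGraph.Walk.cons hadj p⟩ (Ne.symm hne))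
        omega
    exact SimpleGraph.dist_eq_one_iff_adj.mp hds
  · intro hadj
    refine ⟨⟨hadj.ne', hadj.reachable⟩, ?_⟩
    intro s' hs'
    have h1 : G.dist t s = 1 := SimpleGraph.dist_eq_one_iff_adj.mpr hadj
    have : 0 < G.dist t s' := SimpleGraph.Reachable.pos_dist_of_ne hs'.2 (Ne.symm hs'.1)
    omega

lemma eload_adj (G : SimpleGraph V) {u v : V} (huv : G.Adj u v) :
    eload Finset.univ Finset.univ G s(u,v)
      = 1 / (G.degree u : ℝ) + 1 / (G.degree v : ℝ) := by
  have key : ∀ t : V, ∑ s ∈ nearestSources Finset.univ G t,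
      (numSPthru G s t s(u,v) : ℝ) /
        (((nearestSources Finset.univ G t).card : ℝ) * (numSP G s t : ℝ))
      = if t = u then 1 / (G.degree u : ℝ) else if t = v then 1 / (G.degree v : ℝ) else 0 := by
    intro t
    rw [nearestSources_univ]
    have hterm : ∀ s ∈ G.neighborFinset t,
        (numSPthru G s t s(u,v) : ℝ) / (((G.neighborFinset t).card : ℝ) * (numSP G s t : ℝ))
        = if s(u,v) = s(s,t) then 1 / (G.degree t : ℝ) else 0 := by
      intro s hs
      rw [SimpleGraph.mem_neighborFinset] at hs
      rw [numSPthru_adj hs.symm, numSP_adj hs.symm, SimpleGraph.card_neighborFinset_eq_degree]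
      split_ifs with he
      · simp
      · simp
    rw [Finset.sum_congr rfl hterm]
    by_cases htu : t = u
    · subst htu
      rw [if_pos rfl]
      rw [Finset.sum_eq_single_of_mem v (by rw [SimpleGraph.mem_neighborFinset]; exact huv)]
      · rw [if_pos (by rw [Sym2.eq_iff]; tauto)]
      · intro s hs hsv
        rw [if_neg]
        rw [Sym2.eq_iff]
        rintro (⟨-, h2⟩ | ⟨-, h2⟩)
        · exact huv.ne' h2
        · exact hsv h2.symm
    · rw [if_neg htu]
      by_cases htv : t = v
      · subst htv
        rw [if_pos rfl]
        rw [Finset.sum_eq_single_of_mem u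
          (by rw [SimpleGraph.mem_neighborFinset]; exact huv.symm)]
        · rw [if_pos rfl]
        · intro s hs hsu
          rw [if_neg]
          rw [Sym2.eq_iff]
          rintro (⟨h1, -⟩ | ⟨h1, -⟩)
          · exact hsu h1.symm
          · exact htu h1.symm
      · rw [if_neg htv]
        apply Finset.sum_eq_zero
        intro s hs
        rw [if_neg]
        rw [Sym2.eq_iff]
        rintro (⟨-, h2⟩ | ⟨h1, -⟩)
        · exact htv h2.symm
        · exact htu h1.symm
  rw [eload, Finset.sum_congr rfl (fun t _ => key t)]
  rw [← Finset.sum_subset (Finset.subset_univ {u, v})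
    (by intro x _ hx
        simp only [Finset.mem_insert, Finset.mem_singleton, not_or] at hx
        rw [if_neg hx.1, if_neg hx.2])]
  rw [Finset.sum_pair huv.ne]
  rw [if_pos rfl, if_neg (Ne.symm huv.ne), if_pos rfl]


lemma degree_le_ncard_edges (G : SimpleGraph V) (a : V) :
    G.degree a ≤ G.edgeSet.ncard := by
  rw [← SimpleGraph.card_incidenceFinset_eq_degree, Set.ncard_eq_toFinset_card']
  apply Finset.card_le_card
  intro e he
  rw [SimpleGraph.mem_incidenceFinset] at he
  simpa using G.incidenceSet_subset a he

lemma fop_fixed (G0 : SimpleGraph V) (S : Finset V) :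
    Fop Finset.univ Finset.univ G0 (G0.edgeSet.ncard : ℝ) (deleteVerts G0 S)
      = deleteVerts G0 S := by
  set H := deleteVerts G0 S with hHdef
  ext a b
  simp only [Fop]
  constructor
  · exact fun h => h.1
  · intro h
    refine ⟨h, ?_⟩
    have hG0 : G0.Adj a b := h.1
    set E : ℝ := (G0.edgeSet.ncard : ℝ) with hE
    have hHa : 1 ≤ (H.degree a : ℝ) := by
      have : 0 < H.degree a := by
        rw [← SimpleGraph.card_neighborFinset_eq_degree, Finset.card_pos]
        exact ⟨b, by rw [SimpleGraph.mem_neighborFinset]; exact h⟩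
      exact_mod_cast this
    have hHb : 1 ≤ (H.degree b : ℝ) := by
      have : 0 < H.degree b := by
        rw [← SimpleGraph.card_neighborFinset_eq_degree, Finset.card_pos]
        exact ⟨a, by rw [SimpleGraph.mem_neighborFinset]; exact h.symm⟩
      exact_mod_cast this
    have h0a : 1 ≤ (G0.degree a : ℝ) := by
      have : 0 < G0.degree a := by
        rw [← SimpleGraph.card_neighborFinset_eq_degree, Finset.card_pos]
        exact ⟨b, by rw [SimpleGraph.mem_neighborFinset]; exact hG0⟩
      exact_mod_cast this
    have h0b : 1 ≤ (G0.degree b : ℝ) := by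
      have : 0 < G0.degree b := by
        rw [← SimpleGraph.card_neighborFinset_eq_degree, Finset.card_pos]
        exact ⟨a, by rw [SimpleGraph.mem_neighborFinset]; exact hG0.symm⟩
      exact_mod_cast this
    have haE : (G0.degree a : ℝ) ≤ E := by rw [hE]; exact_mod_cast degree_le_ncard_edges G0 a
    have hbE : (G0.degree b : ℝ) ≤ E := by rw [hE]; exact_mod_cast degree_le_ncard_edges G0 b
    have hE1 : (1:ℝ) ≤ E := le_trans h0a haE
    have hEpos : (0:ℝ) < E := lt_of_lt_of_le one_pos hE1
    rw [eload_adj H h, eload_adj G0 hG0]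
    have step1 : 1 / (H.degree a : ℝ) + 1 / (H.degree b : ℝ) ≤ 2 := by
      have h1 : 1 / (H.degree a : ℝ) ≤ 1 := (div_le_one (by linarith)).mpr hHa
      have h2 : 1 / (H.degree b : ℝ) ≤ 1 := (div_le_one (by linarith)).mpr hHb
      linarith
    have step2 : (2:ℝ) ≤ (1 + E) * (1/E + 1/E) := by
      have : (1 + E) * (1/E + 1/E) = 2/E + 2 := by field_simp; ring
      rw [this]
      have : 0 < 2/E := by positivity
      linarith
    have step3 : (1 + E) * (1/E + 1/E)
        ≤ (1 + E) * (1 / (G0.degree a : ℝ) + 1 / (G0.degree b : ℝ)) := by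
      apply mul_le_mul_of_nonneg_left _ (by linarith)
      have h3 : 1/E ≤ 1 / (G0.degree a : ℝ) :=
        one_div_le_one_div_of_le (by linarith) haE
      have h4 : 1/E ≤ 1 / (G0.degree b : ℝ) :=
        one_div_le_one_div_of_le (by linarith) hbE
      linarith
    linarith

/-- Correctness of the vertex-cover reduction for the attacker's best response: in the
network with `G₀ = G'`, `V_src = V_ld = V'` and `α = |E'|`, the graph `G'` has a vertex
cover of size at most `k` iff there is an attack `V_a` with `|V_a| ≤ k` whose payoff
(against the empty defense) is at least `|V'|`, i.e. disconnecting every load node. -/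
theorem vertex_cover_iff_attack_disconnects_all {V : Type*} [Fintype V] [DecidableEq V]
    (G' : SimpleGraph V) (k : ℕ) :
    (∃ C : Finset V, C.card ≤ k ∧ ∀ u v : V, G'.Adj u v → u ∈ C ∨ v ∈ C) ↔
      (∃ Va : Finset V, Va.card ≤ k ∧
        Fintype.card V ≤
          payoff Finset.univ Finset.univ G' (G'.edgeSet.ncard : ℝ) Va ∅) := by
  constructor
  · rintro ⟨C, hC, hcov⟩
    refine ⟨C, hC, ?_⟩
    have hbot : deleteVerts G' (C \ ∅) = (⊥ : SimpleGraph V) := by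
      ext a b
      simp only [deleteVerts, Finset.sdiff_empty, SimpleGraph.bot_adj, iff_false]
      rintro ⟨hadj, ha, hb⟩
      rcases hcov a b hadj with h | h
      exacts [ha h, hb h]
    rw [payoff, hbot]
    have hfix : Fop Finset.univ Finset.univ G' (G'.edgeSet.ncard : ℝ) ⊥ = ⊥ := by
      ext a b
      simp [Fop]
    rw [Fstar, Function.iterate_fixed hfix, disc]
    refine le_trans (le_of_eq Finset.card_univ.symm) (Finset.card_le_card ?_)
    intro t _
    simp only [Finset.mem_filter]
    exact ⟨Finset.mem_univ t, fun s _ hst hr => hst (SimpleGraph.reachable_bot.mp hr).symm⟩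
  · rintro ⟨Va, hVa, hpay⟩
    refine ⟨Va, hVa, ?_⟩
    intro u v hadj
    by_contra hcon
    push_neg at hcon
    have hHadj : (deleteVerts G' (Va \ ∅)).Adj u v :=
      ⟨hadj, by simpa using hcon.1, by simpa using hcon.2⟩
    rw [payoff, Fstar, Function.iterate_fixed (fop_fixed G' (Va \ ∅)), disc] at hpay
    have heq := Finset.eq_univ_of_card _ (le_antisymm (Finset.card_le_univ _) hpay)
    have hu := Finset.eq_univ_iff_forall.mp heq u
    simp only [Finset.mem_filter] at hu
    exact hu.2 v (Finset.mem_univ v) hadj.ne' hHadj.reachable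

end
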